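/- Let F be a field with char(F) ≠ 2 and G a non-abelian group with involution * extended to FG. If FG is normal, then the involution * fixes exactly the central elements of G: g* = g if and only if g ∈ ζ(G). -/

import Mathlib

/-- The F-linear extension of a group involution `st` to the group algebra. -/
noncomputable def invMap {F G : Type*} [Field F] [Group G] (st : G → G) :
    MonoidAlgebra F G → MonoidAlgebra F G :=
  fun α => MonoidAlgebra.ofCoeff (Finsupp.mapDomain st α.coeff)

lemma invMap_single {F G : Type*} [Field F] [Group G] (st : G → G) (x : G) :
    invMap (F := F) st (MonoidAlgebra.single x 1) = MonoidAlgebra.single (st x) 1 := by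
  show MonoidAlgebra.ofCoeff (Finsupp.mapDomain st (Finsupp.single x 1))
    = MonoidAlgebra.ofCoeff (Finsupp.single (st x) 1)
  exact congrArg _ Finsupp.mapDomain_single

lemma key_comm {F G : Type*} [Field F] [Group G] (st : G → G)
    (hnormal : ∀ α : MonoidAlgebra F G, α * invMap st α = invMap st α * α)
    (x : G) : x * st x = st x * x := by
  have h := hnormal (MonoidAlgebra.single x 1)
  rw [invMap_single, MonoidAlgebra.single_mul_single, MonoidAlgebra.single_mul_single,
    one_mul] at h
  exact MonoidAlgebra.single_left_injective (one_ne_zero (α := F)) h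

lemma key_dichotomy {F G : Type*} [Field F] [Group G] (h2 : (2 : F) ≠ 0) (st : G → G)
    (hnormal : ∀ α : MonoidAlgebra F G, α * invMap st α = invMap st α * α)
    (g h : G) :
    (g * st h = st g * h ∧ h * st g = st h * g) ∨
    (g * st h = st h * g ∧ h * st g = st g * h) := by
  have E := hnormal (MonoidAlgebra.single g 1 + MonoidAlgebra.single h 1)
  have hadd : invMap (F := F) st (MonoidAlgebra.single g 1 + MonoidAlgebra.single h 1)
      = MonoidAlgebra.single (st g) 1 + MonoidAlgebra.single (st h) 1 := by
    show MonoidAlgebra.ofCoeff (Finsupp.mapDomain st (Finsupp.single g 1 + Finsupp.single h 1))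
      = MonoidAlgebra.ofCoeff (Finsupp.single (st g) 1 + Finsupp.single (st h) 1)
    rw [Finsupp.mapDomain_add, Finsupp.mapDomain_single, Finsupp.mapDomain_single]
  rw [hadd, add_mul, add_mul, mul_add, mul_add, mul_add, mul_add,
    MonoidAlgebra.single_mul_single, MonoidAlgebra.single_mul_single,
    MonoidAlgebra.single_mul_single, MonoidAlgebra.single_mul_single,
    MonoidAlgebra.single_mul_single, MonoidAlgebra.single_mul_single,
    MonoidAlgebra.single_mul_single, MonoidAlgebra.single_mul_single,
    one_mul, key_comm st hnormal g, key_comm st hnormal h] at E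
  -- E : (A + X') + (Y' + B) = (A + X) + (Y + B) form; extract X + Y = X' + Y'
  set A := MonoidAlgebra.single (st g * g) (1 : F) with hA
  set B := MonoidAlgebra.single (st h * h) (1 : F) with hB
  set X := MonoidAlgebra.single (g * st h) (1 : F) with hX
  set Y := MonoidAlgebra.single (h * st g) (1 : F) with hY
  set X' := MonoidAlgebra.single (st g * h) (1 : F) with hX'
  set Y' := MonoidAlgebra.single (st h * g) (1 : F) with hY'
  have E' : X + Y = X' + Y' := by
    have h5 : (X + Y) - (X' + Y') = (A + X + (Y + B)) - (A + X' + (Y' + B)) := by abel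
    rw [E, sub_self] at h5
    exact sub_eq_zero.mp h5
  by_cases hc1 : g * st h = st g * h
  · left
    refine ⟨hc1, ?_⟩
    rw [hX, hc1, ← hX'] at E'
    have := add_left_cancel E'
    exact MonoidAlgebra.single_left_injective (one_ne_zero (α := F)) this
  · right
    by_cases hc2 : g * st h = st h * g
    · refine ⟨hc2, ?_⟩
      rw [hX, hc2, ← hY', add_comm X' Y'] at E'
      have := add_left_cancel E'
      exact MonoidAlgebra.single_left_injective (one_ne_zero (α := F)) this
    · exfalso
      have n1 : st g * h ≠ g * st h := fun e => hc1 e.symm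
      have n2 : st h * g ≠ g * st h := fun e => hc2 e.symm
      have E'' : (Finsupp.single (g * st h) (1:F)) + Finsupp.single (h * st g) 1
          = Finsupp.single (st g * h) 1 + Finsupp.single (st h * g) 1 := congrArg MonoidAlgebra.coeff E'
      have hval := DFunLike.congr_fun E'' (g * st h)
      classical
      rw [Finsupp.add_apply, Finsupp.add_apply] at hval
      rw [Finsupp.single_apply, Finsupp.single_apply, Finsupp.single_apply,
        Finsupp.single_apply, if_pos rfl, if_neg n1, if_neg n2] at hval
      by_cases hd : h * st g = g * st h
      · rw [if_pos hd] at hval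
        apply h2
        rw [← one_add_one_eq_two]
        simpa using hval
      · rw [if_neg hd] at hval
        simp at hval

theorem stmt_4 {F G : Type*} [Field F] [Group G] (h2 : (2 : F) ≠ 0)
    (hna : ∃ g h : G, g * h ≠ h * g)
    (st : G → G) (hanti : ∀ g h : G, st (g * h) = st h * st g)
    (hinvol : ∀ g : G, st (st g) = g)
    (hnormal : ∀ α : MonoidAlgebra F G, α * invMap st α = invMap st α * α) :
    ∀ g : G, st g = g ↔ g ∈ Subgroup.center G := by
  intro g
  constructor
  · intro hg
    rw [Subgroup.mem_center_iff]
    intro h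
    rcases key_dichotomy h2 st hnormal g h with ⟨e1, _⟩ | ⟨_, e2⟩
    · -- e1 : g * st h = st g * h, so with st g = g, st h = h
      rw [hg] at e1
      have hh : st h = h := mul_left_cancel e1
      have e : st (g * h) = h * g := by rw [hanti, hh, hg]
      rcases key_dichotomy h2 st hnormal g (g * h) with ⟨k1, _⟩ | ⟨k1, _⟩
      · -- k1 : g * st (g*h) = st g * (g*h) = g * (g*h), i.e. g*(h*g) = g*(g*h)
        rw [e, hg] at k1
        exact mul_left_cancel k1
      · -- k1 : g * st (g*h) = st (g*h) * g, i.e. g*(h*g) = (h*g)*g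
        rw [e] at k1
        have : g * h * g = h * g * g := by
          rw [mul_assoc]; exact k1
        have := mul_right_cancel this
        exact this.symm
    · -- e2 : h * st g = st g * h, with st g = g
      rw [hg] at e2
      exact e2
  · intro hg
    by_contra hne
    have hc : ∀ h : G, h * g = g * h := fun h => Subgroup.mem_center_iff.mp hg h
    have main : ∀ a b : G, a * st b = st b * a := by
      intro a b
      rcases key_dichotomy h2 st hnormal a b with hA | hB
      · rcases key_dichotomy h2 st hnormal (g * a) b with hA' | hB'
        · exfalso
          apply hne
          have e1 := hA.1   -- a * st b = st a * b
          have e2 := hA'.1  -- (g*a) * st b = st (g*a) * b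
          rw [hanti] at e2  -- g * a * st b = st a * st g * b
          have e3 : g * (a * st b) = st a * (st g * b) := by
            rw [← mul_assoc, e2]; exact mul_assoc _ _ _
          rw [e1] at e3     -- g * (st a * b) = st a * (st g * b)
          have e4 : st a * (g * b) = st a * (st g * b) := by
            rw [← mul_assoc, hc (st a), mul_assoc]; exact e3
          have e5 : g * b = st g * b := mul_left_cancel e4
          exact (mul_right_cancel e5).symm
        · -- hB'.1 : (g*a) * st b = st b * (g*a)
          have h3 : g * (a * st b) = g * (st b * a) := by
            calc g * (a * st b) = g * a * st b := (mul_assoc _ _ _).symm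
              _ = st b * (g * a) := hB'.1
              _ = st b * g * a := (mul_assoc _ _ _).symm
              _ = g * st b * a := by rw [hc (st b)]
              _ = g * (st b * a) := mul_assoc _ _ _
          exact mul_left_cancel h3
      · exact hB.1
    obtain ⟨x, y, hxy⟩ := hna
    apply hxy
    have := main x (st y)
    rwa [hinvol] at this
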